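/- arXiv:2306.07492 — 2 statements merged into one kernel-verified Lean document; each statement's English description precedes it below -/
import Mathlib

section
/- Let (𝒲, 𝒜, ν₁) and (𝒯, ℬ, ν₂) be σ-finite measure spaces, let y : 𝒯 → ℝ be measurable, let p : 𝒲 × 𝒯 → [0, ∞) be measurable with ∫ p d(ν₁ ⊗ ν₂) = 1, and let η : 𝒲 × 𝒯 → ℝ be bounded measurable. Fix w ∈ 𝒲 with p_W(w) := ∫ p(w, t) dν₂(t) ∈ (0, ∞) and ∫ |y(t)| p(w, t) dν₂(t) < ∞, and set μ₀(w) := ∫ y(t) p(w, t) dν₂(t) / p_W(w). For |ε| < 1/sup|η| define μ_ε(w) := ∫ y(t) p(w, t)(1 + εη(w, t)) dν₂(t) / ∫ p(w, t)(1 + εη(w, t)) dν₂(t). Then ε ↦ μ_ε(w) is differentiable at ε = 0 with derivative ∫ {y(t) − μ₀(w)} η(w, t) p(w, t) dν₂(t) / p_W(w). -/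
open MeasureTheory

/-- The intermediate computation in the proof of the paper's Lemma 1: the perturbed conditional
mean `μ_ε(w)` under the density `p(1 + εη)` is differentiable at `ε = 0` with derivative
`∫ (y(t) − μ₀(w)) η(w,t) p(w,t) dν₂(t) / p_W(w)`.  (The perturbed conditional mean is defined
for all `ε`; it agrees with the intended definition for `|ε| < 1 / sup |η|`.) -/
theorem pathwise_derivative_conditional_mean
    {𝒲 𝒯 : Type*} [MeasurableSpace 𝒲] [MeasurableSpace 𝒯]
    (ν₁ : Measure 𝒲) [SigmaFinite ν₁] (ν₂ : Measure 𝒯) [SigmaFinite ν₂]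
    (y : 𝒯 → ℝ) (hy_meas : Measurable y)
    (p : 𝒲 × 𝒯 → ℝ) (hp_meas : Measurable p) (hp_nonneg : ∀ z, 0 ≤ p z)
    (hp_int : ∫ z, p z ∂(ν₁.prod ν₂) = 1)
    (C : ℝ) (hC : 0 < C)
    (η : 𝒲 × 𝒯 → ℝ) (hη_meas : Measurable η) (hη_bdd : ∀ z, |η z| ≤ C)
    (w : 𝒲)
    (pW : ℝ) (hpW : pW = ∫ t, p (w, t) ∂ν₂) (hpW_pos : 0 < pW)
    (hy_int : Integrable (fun t => |y t| * p (w, t)) ν₂)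
    (μ₀ : ℝ) (hμ₀ : μ₀ = (∫ t, y t * p (w, t) ∂ν₂) / pW)
    (με : ℝ → ℝ)
    (hμε : ∀ ε, με ε =
      (∫ t, y t * (p (w, t) * (1 + ε * η (w, t))) ∂ν₂) /
        (∫ t, p (w, t) * (1 + ε * η (w, t)) ∂ν₂)) :
    HasDerivAt με ((∫ t, (y t - μ₀) * η (w, t) * p (w, t) ∂ν₂) / pW) 0 := by
  have hpw_meas : Measurable (fun t => p (w, t)) := hp_meas.comp measurable_prodMk_left
  have hηw_meas : Measurable (fun t => η (w, t)) := hη_meas.comp measurable_prodMk_left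
  have hp_intw : Integrable (fun t => p (w, t)) ν₂ := by
    by_contra h
    rw [hpW, integral_undef h] at hpW_pos
    exact lt_irrefl 0 hpW_pos
  -- integrability of the three pieces
  have hf1 : Integrable (fun t => y t * p (w, t)) ν₂ := by
    refine hy_int.mono' ((hy_meas.mul hpw_meas).aestronglyMeasurable) ?_
    filter_upwards with t
    rw [Real.norm_eq_abs, abs_mul, abs_of_nonneg (hp_nonneg _)]
  have hf2 : Integrable (fun t => y t * η (w, t) * p (w, t)) ν₂ := by
    refine (hy_int.const_mul C).mono'
      (((hy_meas.mul hηw_meas).mul hpw_meas).aestronglyMeasurable) ?_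
    filter_upwards with t
    have : |y t * η (w, t) * p (w, t)| = |y t| * |η (w, t)| * p (w, t) := by
      rw [abs_mul, abs_mul, abs_of_nonneg (hp_nonneg _)]
    rw [Real.norm_eq_abs, this]
    have h1 : |y t| * |η (w, t)| ≤ |y t| * C :=
      mul_le_mul_of_nonneg_left (hη_bdd _) (abs_nonneg _)
    calc |y t| * |η (w, t)| * p (w, t) ≤ |y t| * C * p (w, t) :=
          mul_le_mul_of_nonneg_right h1 (hp_nonneg _)
      _ = C * (|y t| * p (w, t)) := by ring
  have hf3 : Integrable (fun t => η (w, t) * p (w, t)) ν₂ := by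
    refine (hp_intw.const_mul C).mono' ((hηw_meas.mul hpw_meas).aestronglyMeasurable) ?_
    filter_upwards with t
    rw [Real.norm_eq_abs, abs_mul, abs_of_nonneg (hp_nonneg _)]
    calc |η (w, t)| * p (w, t) ≤ C * p (w, t) :=
          mul_le_mul_of_nonneg_right (hη_bdd _) (hp_nonneg _)
      _ = C * p (w, t) := rfl
  set A := ∫ t, y t * p (w, t) ∂ν₂ with hA
  set B := ∫ t, y t * η (w, t) * p (w, t) ∂ν₂ with hB
  set E := ∫ t, η (w, t) * p (w, t) ∂ν₂ with hE
  have hN : ∀ ε : ℝ, (∫ t, y t * (p (w, t) * (1 + ε * η (w, t))) ∂ν₂) = A + ε * B := by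
    intro ε
    have heq : (fun t => y t * (p (w, t) * (1 + ε * η (w, t))))
        = fun t => y t * p (w, t) + ε * (y t * η (w, t) * p (w, t)) := by
      funext t; ring
    rw [heq, integral_add hf1 (hf2.const_mul ε), integral_const_mul]
  have hD : ∀ ε : ℝ, (∫ t, p (w, t) * (1 + ε * η (w, t)) ∂ν₂) = pW + ε * E := by
    intro ε
    have heq : (fun t => p (w, t) * (1 + ε * η (w, t)))
        = fun t => p (w, t) + ε * (η (w, t) * p (w, t)) := by
      funext t; ring
    rw [heq, integral_add hp_intw (hf3.const_mul ε), integral_const_mul, hpW]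
  have hμε' : με = fun ε => (A + ε * B) / (pW + ε * E) := by
    funext ε; rw [hμε, hN, hD]
  have hval : (∫ t, (y t - μ₀) * η (w, t) * p (w, t) ∂ν₂) = B - μ₀ * E := by
    have heq : (fun t => (y t - μ₀) * η (w, t) * p (w, t))
        = fun t => y t * η (w, t) * p (w, t) - μ₀ * (η (w, t) * p (w, t)) := by
      funext t; ring
    rw [heq, integral_sub hf2 (hf3.const_mul μ₀), integral_const_mul]
  have h1 : HasDerivAt (fun ε : ℝ => A + ε * B) B 0 := by
    simpa using ((hasDerivAt_id (0 : ℝ)).mul_const B).const_add A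
  have h2 : HasDerivAt (fun ε : ℝ => pW + ε * E) E 0 := by
    simpa using ((hasDerivAt_id (0 : ℝ)).mul_const E).const_add pW
  have hden : pW + 0 * E ≠ 0 := by simpa using hpW_pos.ne'
  have h := h1.div h2 hden
  have hfin : (∫ t, (y t - μ₀) * η (w, t) * p (w, t) ∂ν₂) / pW
      = (B * (pW + 0 * E) - (A + 0 * B) * E) / (pW + 0 * E) ^ 2 := by
    rw [hval, hμ₀]
    field_simp
    ring_nf
    linear_combination (-(B * pW - A * E) * (pW * pW⁻¹ + 1)) * mul_inv_cancel₀ hpW_pos.ne'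
  rw [hμε', hfin]
  exact h
end

section
/- Let (Ω, 𝔉, P) be a probability space with a sub-σ-algebra 𝒢 ⊆ 𝔉, let Y and F be square-integrable real random variables, let μ_Y := E[Y | 𝒢] and μ_F := E[F | 𝒢], let m_Y and m_F be 𝒢-measurable square-integrable real random variables, and let β ∈ ℝ. Then E[(Y − m_Y − β F)²] + 2β E[(Y − m_Y) m_F] − E[(Y − μ_Y − β F)²] = E[(μ_Y − m_Y)²] + 2β E[(μ_Y − m_Y)(m_F − μ_F)]. -/
open MeasureTheory

/-- Product of two `L²` functions is integrable. -/
lemma memℒp_two_integrable_mul' {Ω : Type*} {𝔉 : MeasurableSpace Ω} {P : Measure Ω}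
    {u v : Ω → ℝ} (hu : MemLp u 2 P) (hv : MemLp v 2 P) :
    Integrable (fun ω => u ω * v ω) P := by
  have h : Integrable (fun ω => (1/2 : ℝ) * (u ω ^ 2 + v ω ^ 2)) P :=
    (hu.integrable_sq.add hv.integrable_sq).const_mul _
  refine h.mono' (hu.aestronglyMeasurable.mul hv.aestronglyMeasurable)
    (Filter.Eventually.of_forall fun ω => ?_)
  rw [Real.norm_eq_abs, abs_mul]
  nlinarith [sq_nonneg (|u ω| - |v ω|), sq_abs (u ω), sq_abs (v ω),
    abs_nonneg (u ω), abs_nonneg (v ω)]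

/-- Conditional expectation of an `L²` function is in `L²`. -/
lemma memℒp_two_condexp' {Ω : Type*} {𝔉 : MeasurableSpace Ω} {P : Measure Ω}
    [IsFiniteMeasure P] {𝒢 : MeasurableSpace Ω} (h𝒢 : 𝒢 ≤ 𝔉)
    {f : Ω → ℝ} (hf : MemLp f 2 P) : MemLp (P[f|𝒢]) 2 P := by
  set g := condExpL2 ℝ ℝ h𝒢 (hf.toLp f) with hgdef
  have hg : MemLp (g.val : Ω → ℝ) 2 P := Lp.memLp g.val
  have heq : (g.val : Ω → ℝ) =ᵐ[P] P[f|𝒢] := by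
    refine ae_eq_condExp_of_forall_setIntegral_eq h𝒢 (hf.integrable one_le_two)
      (fun s _ _ => (hg.integrable one_le_two).restrict) (fun s hs hμs => ?_)
      (lpMeas.aestronglyMeasurable g)
    rw [integral_condExpL2_eq h𝒢 (hf.toLp f) hs hμs.ne]
    exact integral_congr_ae (ae_restrict_of_ae hf.coeFn_toLp)
  exact hg.ae_eq heq

/-- For a `𝒢`-measurable `L²` function `g`, `∫ g f = ∫ g E[f|𝒢]`. -/
lemma integral_mul_eq_integral_mul_condexp' {Ω : Type*} {𝔉 : MeasurableSpace Ω}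
    {P : Measure Ω} [IsFiniteMeasure P] {𝒢 : MeasurableSpace Ω} (h𝒢 : 𝒢 ≤ 𝔉)
    {g f : Ω → ℝ} (hg_meas : StronglyMeasurable[𝒢] g) (hg : MemLp g 2 P)
    (hf : MemLp f 2 P) :
    ∫ ω, g ω * f ω ∂P = ∫ ω, g ω * (P[f|𝒢]) ω ∂P := by
  have hgf : Integrable (g * f) P := memℒp_two_integrable_mul' hg hf
  have hpull : P[g * f|𝒢] =ᵐ[P] g * P[f|𝒢] :=
    condExp_mul_of_stronglyMeasurable_left hg_meas hgf (hf.integrable one_le_two)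
  calc ∫ ω, g ω * f ω ∂P = ∫ ω, (P[g * f|𝒢]) ω ∂P := (integral_condExp h𝒢).symm
    _ = ∫ ω, (g * P[f|𝒢]) ω ∂P := integral_congr_ae hpull
    _ = ∫ ω, g ω * (P[f|𝒢]) ω ∂P := rfl

/-- The exact second-order remainder identity from the proof of the paper's Lemma 2:
`E[(Y − m_Y − βF)²] + 2β E[(Y − m_Y) m_F] − E[(Y − μ_Y − βF)²]
  = E[(μ_Y − m_Y)²] + 2β E[(μ_Y − m_Y)(m_F − μ_F)]`,
where `μ_Y = E[Y|𝒢]` and `μ_F = E[F|𝒢]`. -/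
theorem second_order_remainder_identity
    {Ω : Type*} {𝔉 : MeasurableSpace Ω} (P : Measure Ω) [IsProbabilityMeasure P]
    (𝒢 : MeasurableSpace Ω) (h𝒢 : 𝒢 ≤ 𝔉)
    (Y F : Ω → ℝ) (hY : MemLp Y 2 P) (hF : MemLp F 2 P)
    (mY mF : Ω → ℝ)
    (hmY_meas : StronglyMeasurable[𝒢] mY) (hmY : MemLp mY 2 P)
    (hmF_meas : StronglyMeasurable[𝒢] mF) (hmF : MemLp mF 2 P)
    (β : ℝ) :
    (∫ ω, (Y ω - mY ω - β * F ω) ^ 2 ∂P) + 2 * β * (∫ ω, (Y ω - mY ω) * mF ω ∂P)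
        - (∫ ω, (Y ω - (P[Y|𝒢]) ω - β * F ω) ^ 2 ∂P)
      = (∫ ω, ((P[Y|𝒢]) ω - mY ω) ^ 2 ∂P)
        + 2 * β * ∫ ω, ((P[Y|𝒢]) ω - mY ω) * (mF ω - (P[F|𝒢]) ω) ∂P := by
  set μY := P[Y|𝒢] with hμYdef
  set μF := P[F|𝒢] with hμFdef
  have hμY : MemLp μY 2 P := memℒp_two_condexp' h𝒢 hY
  have hμF : MemLp μF 2 P := memℒp_two_condexp' h𝒢 hF
  have hg_meas : StronglyMeasurable[𝒢] (fun ω => μY ω - mY ω) :=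
    stronglyMeasurable_condExp.sub hmY_meas
  have hg : MemLp (fun ω => μY ω - mY ω) 2 P := hμY.sub hmY
  -- orthogonality relations
  have o1 : ∫ ω, (μY ω - mY ω) * Y ω ∂P = ∫ ω, (μY ω - mY ω) * μY ω ∂P :=
    integral_mul_eq_integral_mul_condexp' h𝒢 hg_meas hg hY
  have o2 : ∫ ω, (μY ω - mY ω) * F ω ∂P = ∫ ω, (μY ω - mY ω) * μF ω ∂P :=
    integral_mul_eq_integral_mul_condexp' h𝒢 hg_meas hg hF
  have o3 : ∫ ω, mF ω * Y ω ∂P = ∫ ω, mF ω * μY ω ∂P :=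
    integral_mul_eq_integral_mul_condexp' h𝒢 hmF_meas hmF hY
  -- integrability facts
  have iA : Integrable (fun ω => (μY ω - mY ω) ^ 2) P := hg.integrable_sq
  have iB : Integrable (fun ω => (μY ω - mY ω) * (Y ω - μY ω)) P :=
    memℒp_two_integrable_mul' hg (hY.sub hμY)
  have iC : Integrable (fun ω => (μY ω - mY ω) * F ω) P :=
    memℒp_two_integrable_mul' hg hF
  have isq1 : MemLp (fun ω => Y ω - mY ω - β * F ω) 2 P :=
    (hY.sub hmY).sub (hF.const_mul β)
  have isq2 : MemLp (fun ω => Y ω - μY ω - β * F ω) 2 P :=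
    (hY.sub hμY).sub (hF.const_mul β)
  -- Step 1: difference of the two squared terms
  have h1 : (∫ ω, (Y ω - mY ω - β * F ω) ^ 2 ∂P)
        - (∫ ω, (Y ω - μY ω - β * F ω) ^ 2 ∂P)
      = (∫ ω, (μY ω - mY ω) ^ 2 ∂P)
        + 2 * (∫ ω, (μY ω - mY ω) * (Y ω - μY ω) ∂P)
        - 2 * β * (∫ ω, (μY ω - mY ω) * F ω ∂P) := by
    have iAB : Integrable (fun ω =>
        (μY ω - mY ω) ^ 2 + 2 * ((μY ω - mY ω) * (Y ω - μY ω))) P :=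
      iA.add (iB.const_mul 2)
    have iC2 : Integrable (fun ω => 2 * β * ((μY ω - mY ω) * F ω)) P :=
      iC.const_mul _
    rw [← integral_sub isq1.integrable_sq isq2.integrable_sq]
    rw [show (∫ ω, (μY ω - mY ω) ^ 2 ∂P)
          + 2 * (∫ ω, (μY ω - mY ω) * (Y ω - μY ω) ∂P)
          - 2 * β * (∫ ω, (μY ω - mY ω) * F ω ∂P)
        = (∫ ω, ((μY ω - mY ω) ^ 2
            + 2 * ((μY ω - mY ω) * (Y ω - μY ω))
            - 2 * β * ((μY ω - mY ω) * F ω)) ∂P) by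
      rw [integral_sub iAB iC2, integral_add iA (iB.const_mul 2),
        integral_const_mul, integral_const_mul]]
    exact integral_congr_ae (Filter.Eventually.of_forall fun ω => by ring)
  -- Step 2: the cross term vanishes
  have hB : ∫ ω, (μY ω - mY ω) * (Y ω - μY ω) ∂P = 0 := by
    have e : ∫ ω, (μY ω - mY ω) * (Y ω - μY ω) ∂P
        = (∫ ω, (μY ω - mY ω) * Y ω ∂P) - ∫ ω, (μY ω - mY ω) * μY ω ∂P := by
      rw [← integral_sub (memℒp_two_integrable_mul' hg hY)
        (memℒp_two_integrable_mul' hg hμY)]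
      exact integral_congr_ae (Filter.Eventually.of_forall fun ω => by ring)
    rw [e, o1, sub_self]
  -- Step 3: rewrite the `(Y - mY) mF` term
  have h2 : ∫ ω, (Y ω - mY ω) * mF ω ∂P = ∫ ω, (μY ω - mY ω) * mF ω ∂P := by
    have e1 : ∫ ω, (Y ω - mY ω) * mF ω ∂P
        = (∫ ω, mF ω * Y ω ∂P) - ∫ ω, mF ω * mY ω ∂P := by
      rw [← integral_sub (memℒp_two_integrable_mul' hmF hY)
        (memℒp_two_integrable_mul' hmF hmY)]
      exact integral_congr_ae (Filter.Eventually.of_forall fun ω => by ring)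
    have e2 : ∫ ω, (μY ω - mY ω) * mF ω ∂P
        = (∫ ω, mF ω * μY ω ∂P) - ∫ ω, mF ω * mY ω ∂P := by
      rw [← integral_sub (memℒp_two_integrable_mul' hmF hμY)
        (memℒp_two_integrable_mul' hmF hmY)]
      exact integral_congr_ae (Filter.Eventually.of_forall fun ω => by ring)
    rw [e1, o3, e2]
  -- Step 4: rewrite the RHS cross term
  have h3 : ∫ ω, (μY ω - mY ω) * (mF ω - μF ω) ∂P
      = (∫ ω, (μY ω - mY ω) * mF ω ∂P) - ∫ ω, (μY ω - mY ω) * μF ω ∂P := by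
    rw [← integral_sub (memℒp_two_integrable_mul' hg hmF)
      (memℒp_two_integrable_mul' hg hμF)]
    exact integral_congr_ae (Filter.Eventually.of_forall fun ω => by ring)
  rw [h2, h3]
  rw [hB, o2] at h1
  linear_combination h1
end
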